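/- Every additive group homomorphism h : ℤ⁴ → ℝ which is non-vanishing on all lattice roots of Γ^{2,2} has 0 as an accumulation point of its values on the lattice roots: for every ε > 0 there exists a lattice root α with 0 < |h(α)| < ε. -/

import Mathlib

def SolInt (a b c d : ℤ) : Prop :=
  ∃ k l m n : ℤ, k*l + m*n = -1 ∧ k*a + l*b + m*c + n*d = 0

lemma sol_swap_ab {a b c d : ℤ} (H : SolInt a b c d) : SolInt b a c d := by
  obtain ⟨k,l,m,n,h1,h2⟩ := H
  exact ⟨l,k,m,n, by linear_combination h1, by linear_combination h2⟩

lemma sol_swap_pairs {a b c d : ℤ} (H : SolInt a b c d) : SolInt c d a b := by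
  obtain ⟨k,l,m,n,h1,h2⟩ := H
  exact ⟨m,n,k,l, by linear_combination h1, by linear_combination h2⟩

lemma sol_O1 {a b c d : ℤ} (u : ℤ) (H : SolInt (a - u*d) b (c + u*b) d) : SolInt a b c d := by
  obtain ⟨k,l,m,n,h1,h2⟩ := H
  exact ⟨k, l + u*m, m, n - u*k, by linear_combination h1, by linear_combination h2⟩

lemma sol_O2 {a b c d : ℤ} (u : ℤ) (H : SolInt (a - u*c) b c (d + u*b)) : SolInt a b c d := by
  obtain ⟨k,l,m,n,h1,h2⟩ := H
  exact ⟨k, l + u*n, m - u*k, n, by linear_combination h1, by linear_combination h2⟩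

lemma sol_O3 {a b c d : ℤ} (u : ℤ) (H : SolInt a (b + u*d) (c - u*a) d) : SolInt a b c d := by
  obtain ⟨k,l,m,n,h1,h2⟩ := H
  exact ⟨k - u*m, l, m, n + u*l, by linear_combination h1, by linear_combination h2⟩

lemma sol_O4 {a b c d : ℤ} (u : ℤ) (H : SolInt a (b + u*c) c (d - u*a)) : SolInt a b c d := by
  obtain ⟨k,l,m,n,h1,h2⟩ := H
  exact ⟨k - u*n, l, m + u*l, n, by linear_combination h1, by linear_combination h2⟩

lemma base_cd0 (a b : ℤ) : SolInt a b 0 0 := by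
  by_cases hab : a = 0 ∧ b = 0
  · exact ⟨1, -1, 0, 0, by ring, by rw [hab.1, hab.2]; ring⟩
  · set g : ℤ := (Int.gcd a b : ℤ) with hg
    obtain ⟨a', ha⟩ : g ∣ a := Int.gcd_dvd_left a b
    obtain ⟨b', hb⟩ : g ∣ b := Int.gcd_dvd_right a b
    exact ⟨b', -a', 1, -1 + a'*b', by ring,
      by linear_combination b' * ha - a' * hb⟩

lemma base_ab0 (c d : ℤ) : SolInt 0 0 c d := sol_swap_pairs (base_cd0 c d)

lemma red (p v : ℤ) (hp : p ≠ 0) :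
    ∃ u r : ℤ, r = v - u * p ∧ 0 ≤ r ∧ r.natAbs < p.natAbs := by
  rcases hp.lt_or_gt with h | h
  · refine ⟨-(v / (-p)), v % (-p), ?_, Int.emod_nonneg v (by omega), ?_⟩
    · have := Int.mul_ediv_add_emod v (-p); linarith
    · have h1 : v % (-p) < -p := Int.emod_lt_of_pos v (by omega)
      have h2 : 0 ≤ v % (-p) := Int.emod_nonneg v (by omega)
      omega
  · refine ⟨v / p, v % p, ?_, Int.emod_nonneg v (by omega), ?_⟩
    · have := Int.mul_ediv_add_emod v p; linarith
    · have h1 : v % p < p := Int.emod_lt_of_pos v h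
      have h2 : 0 ≤ v % p := Int.emod_nonneg v (by omega)
      omega

lemma solInt_a0d (b c d : ℤ) (hd : d ≠ 0)
    (IH : ∀ a' b' c' d' : ℤ, a'.natAbs < d.natAbs → a' ≠ 0 → SolInt a' b' c' d') :
    SolInt 0 b c d := by
  obtain ⟨u, r, hr, hr0, hrlt⟩ := red d b hd
  apply sol_O3 (-u)
  have e1 : b + -u * d = r := by linear_combination -hr
  have e2 : c - -u * 0 = c := by ring
  rw [e1, e2]
  rcases eq_or_ne r 0 with h | h
  · rw [h]; exact base_ab0 c d
  · exact sol_swap_ab (IH r 0 c d hrlt h)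

lemma solInt_a0c (b c d : ℤ) (hc : c ≠ 0)
    (IH : ∀ a' b' c' d' : ℤ, a'.natAbs < c.natAbs → a' ≠ 0 → SolInt a' b' c' d') :
    SolInt 0 b c d := by
  obtain ⟨u, r, hr, hr0, hrlt⟩ := red c b hc
  apply sol_O4 (-u)
  have e1 : b + -u * c = r := by linear_combination -hr
  have e2 : d - -u * 0 = d := by ring
  rw [e1, e2]
  rcases eq_or_ne r 0 with h | h
  · rw [h]; exact base_ab0 c d
  · exact sol_swap_ab (IH r 0 c d hrlt h)

lemma solInt_pos : ∀ (N : ℕ) (a b c d : ℤ), a.natAbs = N → a ≠ 0 → SolInt a b c d := by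
  intro N
  induction N using Nat.strong_induction_on with
  | _ N IH =>
    intro a b c d hN ha
    obtain ⟨u₁, c₁, hc₁, hc₁0, hc₁lt⟩ := red a c ha
    apply sol_O3 u₁
    rw [← hc₁]
    set b₁ := b + u₁ * d with hb₁
    rcases eq_or_ne c₁ 0 with h1 | h1
    · subst h1
      obtain ⟨u₂, d₁, hd₁, hd₁0, hd₁lt⟩ := red a d ha
      apply sol_O4 u₂
      rw [← hd₁]
      have e : b₁ + u₂ * 0 = b₁ := by ring
      rw [e]
      rcases eq_or_ne d₁ 0 with h2 | h2
      · subst h2; exact base_cd0 a b₁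
      · obtain ⟨u₃, a₁, ha₁, ha₁0, ha₁lt⟩ := red d₁ a h2
        apply sol_O1 u₃
        rw [← ha₁]
        rcases eq_or_ne a₁ 0 with h3 | h3
        · subst h3
          exact solInt_a0d _ _ _ h2
            (fun a' b' c' d' hlt ha' => IH a'.natAbs (by omega) a' b' c' d' rfl ha')
        · exact IH a₁.natAbs (by omega) a₁ b₁ (0 + u₃ * b₁) d₁ rfl h3
    · obtain ⟨u₄, a₂, ha₂, ha₂0, ha₂lt⟩ := red c₁ a h1
      apply sol_O2 u₄
      rw [← ha₂]
      rcases eq_or_ne a₂ 0 with h3 | h3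
      · subst h3
        exact solInt_a0c _ _ _ h1
          (fun a' b' c' d' hlt ha' => IH a'.natAbs (by omega) a' b' c' d' rfl ha')
      · exact IH a₂.natAbs (by omega) a₂ b₁ c₁ (d + u₄ * b₁) rfl h3

theorem solInt (a b c d : ℤ) : SolInt a b c d := by
  rcases eq_or_ne a 0 with ha | ha
  · subst ha
    rcases eq_or_ne b 0 with hb | hb
    · subst hb; exact base_ab0 c d
    · exact sol_swap_ab (solInt_pos b.natAbs b 0 c d rfl hb)
  · exact solInt_pos a.natAbs a b c d rfl ha

lemma prog (a b c d : ℝ) (p q : ℤ) (hpq : ¬(p = 0 ∧ q = 0)) :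
    ∃ C : ℝ, ∀ j : ℤ, ∃ k l m n : ℤ, k*l + m*n = -1 ∧
      (k:ℝ)*a + (l:ℝ)*b + (m:ℝ)*c + (n:ℝ)*d = C + (j:ℝ)*((p:ℝ)*a + (q:ℝ)*c) := by
  set g : ℤ := (Int.gcd p q : ℤ) with hgdef
  have hgpos : 0 < Int.gcd p q := by
    rcases Int.gcd_pos_iff.mpr (by tauto) with h; exact h
  obtain ⟨p', hp⟩ : g ∣ p := Int.gcd_dvd_left p q
  obtain ⟨q', hq⟩ : g ∣ q := Int.gcd_dvd_right p q
  have hcop : Int.gcd p' q' = 1 := by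
    have h1 : p / g = p' := by rw [hp]; exact Int.mul_ediv_cancel_left _ (by rw [hgdef]; exact_mod_cast hgpos.ne')
    have h2 : q / g = q' := by rw [hq]; exact Int.mul_ediv_cancel_left _ (by rw [hgdef]; exact_mod_cast hgpos.ne')
    rw [← h1, ← h2]
    exact Int.gcd_div_gcd_div_gcd hgpos
  set s : ℤ := Int.gcdA p' q' with hs
  set t : ℤ := Int.gcdB p' q' with ht
  have hB : (1:ℤ) = p' * s + q' * t := by
    have := Int.gcd_eq_gcd_ab p' q'
    rw [hcop] at this; exact_mod_cast this
  refine ⟨(-t:ℝ)*a + (q':ℝ)*b + (s:ℝ)*c - (p':ℝ)*d, fun j => ⟨-t + j*p, q', s + j*q, -p', ?_, ?_⟩⟩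
  · linear_combination hB + (j*q') * hp - (j*p') * hq
  · push_cast; ring

lemma step (ε a b c d : ℝ)
    (NV : ∀ k l m n : ℤ, k*l + m*n = -1 → (k:ℝ)*a + (l:ℝ)*b + (m:ℝ)*c + (n:ℝ)*d ≠ 0)
    (p q : ℤ) (hpq : ¬(p = 0 ∧ q = 0))
    (hw0 : 0 < (p:ℝ)*a + (q:ℝ)*c) (hwε : (p:ℝ)*a + (q:ℝ)*c < ε) :
    ∃ k l m n : ℤ, k*l + m*n = -1 ∧ 0 < |(k:ℝ)*a + (l:ℝ)*b + (m:ℝ)*c + (n:ℝ)*d| ∧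
      |(k:ℝ)*a + (l:ℝ)*b + (m:ℝ)*c + (n:ℝ)*d| < ε := by
  obtain ⟨C, hC⟩ := prog a b c d p q hpq
  set w : ℝ := (p:ℝ)*a + (q:ℝ)*c with hwdef
  obtain ⟨k, l, m, n, hroot, hval⟩ := hC (-⌊C / w⌋)
  have hwne : w ≠ 0 := ne_of_gt hw0
  have hV : (k:ℝ)*a + (l:ℝ)*b + (m:ℝ)*c + (n:ℝ)*d = w * Int.fract (C / w) := by
    rw [hval, Int.fract]
    push_cast
    field_simp
    ring
  have h0 : 0 ≤ w * Int.fract (C / w) := mul_nonneg hw0.le (Int.fract_nonneg _)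
  have h1 : w * Int.fract (C / w) < w := mul_lt_of_lt_one_right hw0 (Int.fract_lt_one _)
  refine ⟨k, l, m, n, hroot, ?_, ?_⟩
  · rw [abs_pos]; exact NV k l m n hroot
  · rw [hV, abs_of_nonneg h0]; linarith

lemma dense_get (x y : ℝ) (hD : Dense ((AddSubgroup.closure {x, y} : AddSubgroup ℝ) : Set ℝ))
    (ε : ℝ) (hε : 0 < ε) :
    ∃ p q : ℤ, ¬(p = 0 ∧ q = 0) ∧ 0 < (p:ℝ)*x + (q:ℝ)*y ∧ (p:ℝ)*x + (q:ℝ)*y < ε := by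
  obtain ⟨z, hz, hdist⟩ := Metric.mem_closure_iff.mp (hD (ε/2)) (ε/2) (by linarith)
  have hzb : 0 < z ∧ z < ε := by
    rw [Real.dist_eq, abs_lt] at hdist
    constructor <;> linarith
  obtain ⟨p, q, hpq⟩ := AddSubgroup.mem_closure_pair.mp hz
  refine ⟨p, q, ?_, ?_, ?_⟩
  · rintro ⟨rfl, rfl⟩
    simp at hpq
    rw [← hpq] at hzb
    exact lt_irrefl 0 hzb.1
  · have : (p:ℝ)*x + (q:ℝ)*y = z := by rw [← hpq]; push_cast [zsmul_eq_mul]; ring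
    rw [this]; exact hzb.1
  · have : (p:ℝ)*x + (q:ℝ)*y = z := by rw [← hpq]; push_cast [zsmul_eq_mul]; ring
    rw [this]; exact hzb.2

lemma key (ε a b c d : ℝ) (hε : 0 < ε)
    (NV : ∀ k l m n : ℤ, k*l + m*n = -1 → (k:ℝ)*a + (l:ℝ)*b + (m:ℝ)*c + (n:ℝ)*d ≠ 0) :
    ∃ k l m n : ℤ, k*l + m*n = -1 ∧ 0 < |(k:ℝ)*a + (l:ℝ)*b + (m:ℝ)*c + (n:ℝ)*d| ∧
      |(k:ℝ)*a + (l:ℝ)*b + (m:ℝ)*c + (n:ℝ)*d| < ε := by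
  have hab : a ≠ b := by
    intro h
    exact NV 1 (-1) 0 0 (by ring) (by push_cast; rw [h]; ring)
  have hcd : c ≠ d := by
    intro h
    exact NV 0 0 1 (-1) (by ring) (by push_cast; rw [h]; ring)
  rcases AddSubgroup.dense_or_cyclic (AddSubgroup.closure ({a, c} : Set ℝ)) with Dac | ⟨g1, hg1⟩
  · obtain ⟨p, q, h0, h1, h2⟩ := dense_get a c Dac ε hε
    exact step ε a b c d NV p q h0 h1 h2
  rcases AddSubgroup.dense_or_cyclic (AddSubgroup.closure ({a, d} : Set ℝ)) with Dad | ⟨g2, hg2⟩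
  · obtain ⟨p, q, h0, h1, h2⟩ := dense_get a d Dad ε hε
    have NV' : ∀ k l m n : ℤ, k*l + m*n = -1 →
        (k:ℝ)*a + (l:ℝ)*b + (m:ℝ)*d + (n:ℝ)*c ≠ 0 := by
      intro k l m n hr h
      exact NV k l n m (by linear_combination hr) (by linear_combination h)
    obtain ⟨k, l, m, n, h1', h2', h3'⟩ := step ε a b d c NV' p q h0 h1 h2
    have e : (k:ℝ)*a + (l:ℝ)*b + (n:ℝ)*c + (m:ℝ)*d
        = (k:ℝ)*a + (l:ℝ)*b + (m:ℝ)*d + (n:ℝ)*c := by ring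
    exact ⟨k, l, n, m, by linear_combination h1', by rw [e]; exact h2', by rw [e]; exact h3'⟩
  rcases AddSubgroup.dense_or_cyclic (AddSubgroup.closure ({b, c} : Set ℝ)) with Dbc | ⟨g3, hg3⟩
  · obtain ⟨p, q, h0, h1, h2⟩ := dense_get b c Dbc ε hε
    have NV' : ∀ k l m n : ℤ, k*l + m*n = -1 →
        (k:ℝ)*b + (l:ℝ)*a + (m:ℝ)*c + (n:ℝ)*d ≠ 0 := by
      intro k l m n hr h
      exact NV l k m n (by linear_combination hr) (by linear_combination h)
    obtain ⟨k, l, m, n, h1', h2', h3'⟩ := step ε b a c d NV' p q h0 h1 h2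
    have e : (l:ℝ)*a + (k:ℝ)*b + (m:ℝ)*c + (n:ℝ)*d
        = (k:ℝ)*b + (l:ℝ)*a + (m:ℝ)*c + (n:ℝ)*d := by ring
    exact ⟨l, k, m, n, by linear_combination h1', by rw [e]; exact h2', by rw [e]; exact h3'⟩
  rcases AddSubgroup.dense_or_cyclic (AddSubgroup.closure ({b, d} : Set ℝ)) with Dbd | ⟨g4, hg4⟩
  · obtain ⟨p, q, h0, h1, h2⟩ := dense_get b d Dbd ε hε
    have NV' : ∀ k l m n : ℤ, k*l + m*n = -1 →
        (k:ℝ)*b + (l:ℝ)*a + (m:ℝ)*d + (n:ℝ)*c ≠ 0 := by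
      intro k l m n hr h
      exact NV l k n m (by linear_combination hr) (by linear_combination h)
    obtain ⟨k, l, m, n, h1', h2', h3'⟩ := step ε b a d c NV' p q h0 h1 h2
    have e : (l:ℝ)*a + (k:ℝ)*b + (n:ℝ)*c + (m:ℝ)*d
        = (k:ℝ)*b + (l:ℝ)*a + (m:ℝ)*d + (n:ℝ)*c := by ring
    exact ⟨l, k, n, m, by linear_combination h1', by rw [e]; exact h2', by rw [e]; exact h3'⟩
  -- all four pair subgroups cyclic: commensurable case, contradiction
  exfalso
  have mem_a1 : a ∈ AddSubgroup.closure ({a, c} : Set ℝ) := AddSubgroup.subset_closure (by simp)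
  have mem_c1 : c ∈ AddSubgroup.closure ({a, c} : Set ℝ) := AddSubgroup.subset_closure (by simp)
  have mem_a2 : a ∈ AddSubgroup.closure ({a, d} : Set ℝ) := AddSubgroup.subset_closure (by simp)
  have mem_d2 : d ∈ AddSubgroup.closure ({a, d} : Set ℝ) := AddSubgroup.subset_closure (by simp)
  have mem_b3 : b ∈ AddSubgroup.closure ({b, c} : Set ℝ) := AddSubgroup.subset_closure (by simp)
  have mem_c3 : c ∈ AddSubgroup.closure ({b, c} : Set ℝ) := AddSubgroup.subset_closure (by simp)
  have mem_b4 : b ∈ AddSubgroup.closure ({b, d} : Set ℝ) := AddSubgroup.subset_closure (by simp)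
  have mem_d4 : d ∈ AddSubgroup.closure ({b, d} : Set ℝ) := AddSubgroup.subset_closure (by simp)
  rw [hg1] at mem_a1 mem_c1
  rw [hg2] at mem_a2 mem_d2
  rw [hg3] at mem_b3 mem_c3
  rw [hg4] at mem_b4 mem_d4
  obtain ⟨p1, hp1⟩ := AddSubgroup.mem_closure_singleton.mp mem_a1
  obtain ⟨q1, hq1⟩ := AddSubgroup.mem_closure_singleton.mp mem_c1
  obtain ⟨p2, hp2⟩ := AddSubgroup.mem_closure_singleton.mp mem_a2
  obtain ⟨q2, hq2⟩ := AddSubgroup.mem_closure_singleton.mp mem_d2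
  obtain ⟨p3, hp3⟩ := AddSubgroup.mem_closure_singleton.mp mem_b3
  obtain ⟨q3, hq3⟩ := AddSubgroup.mem_closure_singleton.mp mem_c3
  obtain ⟨p4, hp4⟩ := AddSubgroup.mem_closure_singleton.mp mem_b4
  obtain ⟨q4, hq4⟩ := AddSubgroup.mem_closure_singleton.mp mem_d4
  have e1 : (p1:ℝ) * g1 = a := by rw [← hp1]; simp [zsmul_eq_mul]
  have e2 : (q1:ℝ) * g1 = c := by rw [← hq1]; simp [zsmul_eq_mul]
  have e3 : (p2:ℝ) * g2 = a := by rw [← hp2]; simp [zsmul_eq_mul]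
  have e4 : (q2:ℝ) * g2 = d := by rw [← hq2]; simp [zsmul_eq_mul]
  have e5 : (p3:ℝ) * g3 = b := by rw [← hp3]; simp [zsmul_eq_mul]
  have e6 : (q3:ℝ) * g3 = c := by rw [← hq3]; simp [zsmul_eq_mul]
  have e7 : (p4:ℝ) * g4 = b := by rw [← hp4]; simp [zsmul_eq_mul]
  have e8 : (q4:ℝ) * g4 = d := by rw [← hq4]; simp [zsmul_eq_mul]
  obtain ⟨A, B, C0, D, r, hA, hB2, hC2, hD2⟩ :
      ∃ (A B C0 D : ℤ) (r : ℝ), a = (A:ℝ)*r ∧ b = (B:ℝ)*r ∧ c = (C0:ℝ)*r ∧ d = (D:ℝ)*r := by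
    rcases eq_or_ne a 0 with haz | haz
    · -- a = 0, so b ≠ 0
      have hbz : b ≠ 0 := fun h => hab (by rw [haz, h])
      have hp4 : (p4:ℝ) ≠ 0 := fun h => hbz (by rw [← e7, h, zero_mul])
      refine ⟨0, p3*p4, q3*p4, q4*p3, g3 / (p4:ℝ), by rw [haz]; push_cast; ring, ?_, ?_, ?_⟩
      · push_cast; field_simp; linear_combination -e5
      · push_cast; field_simp; linear_combination -e6
      · push_cast; field_simp; linear_combination -(q4:ℝ) * e5 + (q4:ℝ) * e7 - (p4:ℝ) * e8
    · rcases eq_or_ne c 0 with hcz | hcz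
      · -- a ≠ 0, c = 0, so d ≠ 0
        have hdz : d ≠ 0 := fun h => hcd (by rw [hcz, h])
        have hq4 : (q4:ℝ) ≠ 0 := fun h => hdz (by rw [← e8, h, zero_mul])
        refine ⟨p2*q4, p4*q2, 0, q2*q4, g2 / (q4:ℝ), ?_, ?_, by rw [hcz]; push_cast; ring, ?_⟩
        · push_cast; field_simp; linear_combination -e3
        · push_cast; field_simp; linear_combination -(p4:ℝ) * e4 + (p4:ℝ) * e8 - (q4:ℝ) * e7
        · push_cast; field_simp; linear_combination -e4
      · -- a ≠ 0, c ≠ 0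
        have hp2 : (p2:ℝ) ≠ 0 := fun h => haz (by rw [← e3, h, zero_mul])
        have hq3 : (q3:ℝ) ≠ 0 := fun h => hcz (by rw [← e6, h, zero_mul])
        refine ⟨p1*q3*p2, p3*q1*p2, q1*q3*p2, q2*p1*q3, g1 / ((q3:ℝ) * (p2:ℝ)), ?_, ?_, ?_, ?_⟩
        · push_cast; field_simp; linear_combination -e1
        · push_cast; field_simp;
          linear_combination -(p3:ℝ) * e2 + (p3:ℝ) * e6 - (q3:ℝ) * e5
        · push_cast; field_simp; linear_combination -e2
        · push_cast; field_simp;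
          linear_combination -(q2:ℝ) * e1 + (q2:ℝ) * e3 - (p2:ℝ) * e4
  obtain ⟨k, l, m, n, h1, h2⟩ := solInt A B C0 D
  have h2' : (k:ℝ)*(A:ℝ) + (l:ℝ)*(B:ℝ) + (m:ℝ)*(C0:ℝ) + (n:ℝ)*(D:ℝ) = 0 := by exact_mod_cast h2
  exact NV k l m n h1 (by rw [hA, hB2, hC2, hD2]; linear_combination r * h2')

/-- A lattice root of `Γ^{2,2}`: an element `(k,l,m,n)` with `kl + mn = -1`,
equivalently of norm `B(α,α) = 2`. -/
def IsLatticeRoot (α : Fin 4 → ℤ) : Prop :=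
  α 0 * α 1 + α 2 * α 3 = -1

/-- Every additive group homomorphism `h : ℤ⁴ → ℝ` which is non-vanishing on
the lattice roots of `Γ^{2,2}` has `0` as an accumulation point of its values
on the lattice roots. -/
theorem height_accumulates_at_zero (h : (Fin 4 → ℤ) →+ ℝ)
    (hnv : ∀ α : Fin 4 → ℤ, IsLatticeRoot α → h α ≠ 0) :
    ∀ ε : ℝ, 0 < ε → ∃ α : Fin 4 → ℤ, IsLatticeRoot α ∧ 0 < |h α| ∧ |h α| < ε := by
  intro ε hε
  set a : ℝ := h (Pi.single 0 1) with ha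
  set b : ℝ := h (Pi.single 1 1) with hb
  set c : ℝ := h (Pi.single 2 1) with hc
  set d : ℝ := h (Pi.single 3 1) with hd
  have hval : ∀ α : Fin 4 → ℤ,
      h α = (α 0 : ℝ) * a + (α 1 : ℝ) * b + (α 2 : ℝ) * c + (α 3 : ℝ) * d := by
    intro α
    have hdecomp : α = α 0 • Pi.single 0 1 + α 1 • Pi.single 1 1
        + α 2 • Pi.single 2 1 + α 3 • Pi.single 3 1 := by
      funext i
      fin_cases i <;> simp [Pi.single_apply]
    conv_lhs => rw [hdecomp]
    rw [map_add, map_add, map_add, map_zsmul, map_zsmul, map_zsmul, map_zsmul]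
    push_cast [zsmul_eq_mul]
    ring
  have NV : ∀ k l m n : ℤ, k*l + m*n = -1 →
      (k:ℝ)*a + (l:ℝ)*b + (m:ℝ)*c + (n:ℝ)*d ≠ 0 := by
    intro k l m n hroot hzero
    have hroot' : IsLatticeRoot ![k, l, m, n] := by
      simpa [IsLatticeRoot] using hroot
    apply hnv _ hroot'
    rw [hval ![k, l, m, n]]
    simpa using hzero
  obtain ⟨k, l, m, n, h1, h2, h3⟩ := key ε a b c d hε NV
  refine ⟨![k, l, m, n], by simpa [IsLatticeRoot] using h1, ?_, ?_⟩
  · rw [hval ![k, l, m, n]]; simpa using h2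
  · rw [hval ![k, l, m, n]]; simpa using h3
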